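/- Let Ω be a nonnegative symmetric closed convex set in ℝ^n, s ∈ {1,...,n-1}, and C_s = {x ∈ ℝ^n : ‖x‖₀ ≤ s} the set of s-sparse vectors. For any x ∈ ℝ^n, any y in the projection of x onto C_s ∩ Ω, and any index set T with supp(y) ⊆ T and |T| ≤ s, the restriction y_T is the (unique) projection of x_T onto Ω_T = {z ∈ ℝ^{|T|} : the vector with support in T equal to z lies in Ω}. -/

import Mathlib

open scoped RealInnerProductSpace

noncomputable section

/-- Euclidean space ℝ^n. -/
abbrev E (n : ℕ) := EuclideanSpace ℝ (Fin n)

/-- Support of a vector, as a finset. -/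
def spt {n : ℕ} (x : E n) : Finset (Fin n) := Finset.univ.filter (fun i => x i ≠ 0)

/-- A set is symmetric if it is invariant under coordinate permutations. -/
def IsSymmSet {n : ℕ} (X : Set (E n)) : Prop :=
  ∀ x ∈ X, ∀ σ : Equiv.Perm (Fin n), (WithLp.toLp 2 (fun i => x (σ i)) : E n) ∈ X

/-- A set is sign-free symmetric if it is symmetric and invariant under sign flips. -/
def IsSignFreeSymmSet {n : ℕ} (X : Set (E n)) : Prop :=
  IsSymmSet X ∧ ∀ x ∈ X, ∀ ε : Fin n → ℝ, (∀ i, ε i = 1 ∨ ε i = -1) →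
    (WithLp.toLp 2 (fun i => ε i * x i) : E n) ∈ X

/-- A set is nonnegative symmetric if it is symmetric and contained in ℝ^n_+. -/
def IsNonnegSymmSet {n : ℕ} (X : Set (E n)) : Prop :=
  IsSymmSet X ∧ ∀ x ∈ X, ∀ i, 0 ≤ x i

/-- `y` is a (Euclidean) projection of `x` onto `X`. -/
def IsProj {n : ℕ} (X : Set (E n)) (x y : E n) : Prop :=
  y ∈ X ∧ ∀ z ∈ X, ‖y - x‖ ≤ ‖z - x‖

/-- The set of s-sparse vectors. -/
def Cs (n s : ℕ) : Set (E n) := {x | (spt x).card ≤ s}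

theorem stmt3 {n s : ℕ} (Ω : Set (E n)) (hcl : IsClosed Ω) (hnn : IsNonnegSymmSet Ω)
    (hconv : Convex ℝ Ω) (hs1 : 1 ≤ s) (hs2 : s < n)
    (x y : E n) (hy : IsProj (Cs n s ∩ Ω) x y)
    (T : Finset (Fin n)) (hT1 : spt y ⊆ T) (hT2 : T.card ≤ s) :
    (y ∈ Ω ∧ ∀ i ∉ T, y i = 0) ∧
    (∀ z ∈ Ω, (∀ i ∉ T, z i = 0) → ‖y - x‖ ≤ ‖z - x‖) ∧
    (∀ z ∈ Ω, (∀ i ∉ T, z i = 0) → ‖z - x‖ ≤ ‖y - x‖ → z = y) := by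
  obtain ⟨⟨hyC, hyΩ⟩, hmin⟩ := hy
  have hy0 : ∀ i ∉ T, y i = 0 := by
    intro i hi
    by_contra h
    exact hi (hT1 (by simp [spt, h]))
  have memCs : ∀ z : E n, (∀ i ∉ T, z i = 0) → z ∈ Cs n s := by
    intro z hz
    have hsub : spt z ⊆ T := by
      intro i hi
      by_contra h
      simp only [spt, Finset.mem_filter, Finset.mem_univ, true_and] at hi
      exact hi (hz i h)
    exact le_trans (Finset.card_le_card hsub) hT2
  refine ⟨⟨hyΩ, hy0⟩, ?_, ?_⟩
  · intro z hzΩ hz0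
    exact hmin z ⟨memCs z hz0, hzΩ⟩
  · intro z hzΩ hz0 hle
    by_contra hne
    set w : E n := (1/2 : ℝ) • y + (1/2 : ℝ) • z with hw
    have hwΩ : w ∈ Ω := hconv hyΩ hzΩ (by norm_num) (by norm_num) (by norm_num)
    have hw0 : ∀ i ∉ T, w i = 0 := by
      intro i hi
      simp [hw, hy0 i hi, hz0 i hi]
    have hwmin : ‖y - x‖ ≤ ‖w - x‖ := hmin w ⟨memCs w hw0, hwΩ⟩
    have key : w - x = (1/2 : ℝ) • ((y - x) + (z - x)) := by
      rw [hw]; module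
    have hwnorm : ‖w - x‖ = (1/2) * ‖(y - x) + (z - x)‖ := by
      rw [key, norm_smul]; norm_num
    have hpar := parallelogram_law_with_norm ℝ (y - x) (z - x)
    have hdiff : (y - x) - (z - x) = y - z := by abel
    have hnz : 0 < ‖(y - x) - (z - x)‖ := by
      rw [hdiff, norm_pos_iff, sub_ne_zero]
      exact fun h => hne h.symm
    have hA : 0 ≤ ‖y - x‖ := norm_nonneg _
    have hB : 0 ≤ ‖z - x‖ := norm_nonneg _
    have hS : 0 ≤ ‖(y - x) + (z - x)‖ := norm_nonneg _
    nlinarith [hpar, hwmin, hwnorm, hle, hnz, hA, hB, hS]
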